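/- Let G be a finite simple graph with vertex set I and fix a vertex i ∈ I. The map sending an element w ∈ M(I, G) which uses each vertex exactly once and has initial alphabet {i} to the orientation G^w of G (in which an edge (u,v) is oriented from u to v iff u appears to the left of v in w) is a well-defined injection into the set of acyclic orientations of G with unique sink i. -/

import Mathlib

/-- The commutation relation on the free monoid: two letters may be exchanged
whenever they are not adjacent in `G`. -/
def traceRel {V : Type*} (G : SimpleGraph V) : FreeMonoid V → FreeMonoid V → Prop :=
  fun x y => ∃ a b : V, ¬ G.Adj a b ∧
    x = FreeMonoid.of a * FreeMonoid.of b ∧ y = FreeMonoid.of b * FreeMonoid.of a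

/-- The congruence on the free monoid generated by the commutation relations. -/
def traceCon {V : Type*} (G : SimpleGraph V) : Con (FreeMonoid V) := conGen (traceRel G)

/-- The free partially commutative monoid (trace monoid) `M(I, G)` associated to `G`. -/
abbrev TraceMonoid {V : Type*} (G : SimpleGraph V) := (traceCon G).Quotient

/-- The element of the trace monoid represented by a list of letters. -/
def traceMk {V : Type*} (G : SimpleGraph V) (L : List V) : TraceMonoid G :=
  (traceCon G).mk' (FreeMonoid.ofList L)

/-- The multiplicity of the letter `i` in the initial alphabet multiset `IA_m(w)`:
the largest `m` such that `w = u · iᵐ`. -/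
noncomputable def IAcount {V : Type*} (G : SimpleGraph V) (w : TraceMonoid G) (i : V) : ℕ :=
  sSup {m : ℕ | ∃ u : TraceMonoid G, w = u * (traceMk G [i]) ^ m}

/-- The initial alphabet `IA(w)` of a trace: the set of letters `i` with `w = u · i`. -/
def IAset {V : Type*} (G : SimpleGraph V) (w : TraceMonoid G) : Set V :=
  {i | ∃ u : TraceMonoid G, w = u * traceMk G [i]}

/-- The orientation `G^w` of `G` determined by a linear word `L`: an edge `(u,v)` is oriented
from `u` to `v` iff `u` appears to the left of `v` in `L`. -/
def wordOrient {V : Type*} [DecidableEq V] (G : SimpleGraph V) (L : List V) (u v : V) : Prop :=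
  G.Adj u v ∧ L.idxOf u < L.idxOf v

namespace Stmt10Aux

variable {V : Type*} [DecidableEq V]

def pf (u v : V) : V → Bool := fun x => x = u || x = v

lemma pf_iff {u v x : V} : pf u v x = true ↔ x = u ∨ x = v := by simp [pf]

lemma filter_pf_comm (u v : V) (L : List V) : L.filter (pf u v) = L.filter (pf v u) := by
  apply List.filter_congr
  intro x _
  simp only [pf]
  exact Bool.or_comm _ _

lemma filter_pf_nil {u v : V} {t : List V} (hu : u ∉ t) (hv : v ∉ t) :
    t.filter (pf u v) = [] := by
  rw [List.filter_eq_nil_iff]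
  intro a ha h
  rcases pf_iff.mp h with rfl | rfl
  · exact hu ha
  · exact hv ha

lemma filter_pf_single {u v : V} {t : List V} (ht : t.Nodup) (hv : v ∈ t) (hu : u ∉ t) :
    t.filter (pf u v) = [v] := by
  induction t with
  | nil => cases hv
  | cons b s ih =>
    rcases List.nodup_cons.mp ht with ⟨hbs, hs⟩
    have hbu : b ≠ u := fun h => hu (h ▸ List.mem_cons_self)
    by_cases hb : b = v
    · have hvs : v ∉ s := hb ▸ hbs
      rw [List.filter_cons_of_pos (by simp [pf, hb]),
        filter_pf_nil (fun h => hu (List.mem_cons_of_mem _ h)) hvs, hb]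
    · have hvs : v ∈ s := by
        rcases List.mem_cons.mp hv with h | h
        · exact absurd h.symm hb
        · exact h
      have hpb : pf u v b = false := by simp [pf, hb, hbu]
      rw [List.filter_cons_of_neg (by simp [hpb])]
      exact ih hs hvs (fun h => hu (List.mem_cons_of_mem _ h))

lemma filter_pair_of_lt {u v : V} {L : List V} (hL : L.Nodup) (hu : u ∈ L) (hv : v ∈ L)
    (hne : u ≠ v) (hlt : List.idxOf u L < List.idxOf v L) :
    L.filter (pf u v) = [u, v] := by
  induction L with
  | nil => cases hu
  | cons a t ih =>
    rcases List.nodup_cons.mp hL with ⟨hat, ht⟩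
    by_cases hau : a = u
    · subst hau
      have hvt : v ∈ t := by
        rcases List.mem_cons.mp hv with h | h
        · exact absurd h.symm hne
        · exact h
      have h2 : t.filter (pf a v) = [v] := filter_pf_single ht hvt hat
      simp [List.filter_cons, pf, h2]
    · by_cases hav : a = v
      · subst hav
        exfalso
        have h0 : List.idxOf a (a :: t) = 0 := by simp
        rw [h0] at hlt
        exact Nat.not_lt_zero _ hlt
      · have hut : u ∈ t := by
          rcases List.mem_cons.mp hu with h | h
          · exact absurd h.symm hau
          · exact h
        have hvt : v ∈ t := by
          rcases List.mem_cons.mp hv with h | h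
          · exact absurd h.symm hav
          · exact h
        have h1 : List.idxOf u (a :: t) = List.idxOf u t + 1 :=
          List.idxOf_cons_ne _ hau
        have h2 : List.idxOf v (a :: t) = List.idxOf v t + 1 :=
          List.idxOf_cons_ne _ hav
        have hlt' : List.idxOf u t < List.idxOf v t := by omega
        have hpa : pf u v a = false := by simp [pf, hau, hav]
        rw [List.filter_cons_of_neg (by simp [hpa])]
        exact ih ht hut hvt hlt'

lemma filter_pair_iff {u v : V} {L : List V} (hL : L.Nodup) (hu : u ∈ L) (hv : v ∈ L)
    (hne : u ≠ v) :
    L.filter (pf u v) = [u, v] ↔ List.idxOf u L < List.idxOf v L := by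
  constructor
  · intro h
    rcases Nat.lt_trichotomy (List.idxOf u L) (List.idxOf v L) with h' | h' | h'
    · exact h'
    · exact absurd ((List.idxOf_inj hu).mp h') hne
    · exfalso
      have := filter_pair_of_lt hL hv hu hne.symm h'
      rw [← filter_pf_comm] at this
      rw [this] at h
      injection h with h1 h2
      exact hne h1.symm
  · exact filter_pair_of_lt hL hu hv hne

variable {G : SimpleGraph V}

lemma toList_two (a b : V) :
    FreeMonoid.toList (FreeMonoid.of a * FreeMonoid.of b) = [a, b] := rfl

lemma filter_invariant {x y : FreeMonoid V}
    (h : ConGen.Rel (traceRel G) x y) {u v : V} (hadj : G.Adj u v) :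
    (FreeMonoid.toList x).filter (pf u v) = (FreeMonoid.toList y).filter (pf u v) := by
  induction h with
  | of x y hxy =>
    obtain ⟨a, b, hab, rfl, rfl⟩ := hxy
    rw [toList_two, toList_two]
    by_cases hba : a = b
    · subst hba; rfl
    · by_cases ha : pf u v a = true <;> by_cases hb : pf u v b = true
      · exfalso
        rcases pf_iff.mp ha with rfl | rfl <;> rcases pf_iff.mp hb with rfl | rfl
        · exact hba rfl
        · exact hab hadj
        · exact hab hadj.symm
        · exact hba rfl
      · simp [List.filter, ha, hb]
      · simp [List.filter, ha, hb]
      · simp [List.filter, ha, hb]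
  | refl _ => rfl
  | symm _ ih => exact ih.symm
  | trans _ _ ih1 ih2 => exact ih1.trans ih2
  | mul _ _ ih1 ih2 => simp [FreeMonoid.toList_mul, List.filter_append, ih1, ih2]

lemma perm_of_rel {x y : FreeMonoid V} (h : ConGen.Rel (traceRel G) x y) :
    (FreeMonoid.toList x).Perm (FreeMonoid.toList y) := by
  induction h with
  | of x y hxy =>
    obtain ⟨a, b, _, rfl, rfl⟩ := hxy
    rw [toList_two, toList_two]
    exact List.Perm.swap b a []
  | refl _ => exact List.Perm.refl _
  | symm _ ih => exact ih.symm
  | trans _ _ ih1 ih2 => exact ih1.trans ih2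
  | mul _ _ ih1 ih2 => simpa [FreeMonoid.toList_mul] using ih1.append ih2

lemma traceMk_eq_iff {L L' : List V} :
    traceMk G L = traceMk G L' ↔
      ConGen.Rel (traceRel G) (FreeMonoid.ofList L) (FreeMonoid.ofList L') := Con.eq _

lemma traceMk_append (A B : List V) :
    traceMk G (A ++ B) = traceMk G A * traceMk G B := by
  simp [traceMk, ← map_mul]

lemma traceMk_swap {a b : V} (h : ¬ G.Adj a b) :
    traceMk G ([a, b]) = traceMk G ([b, a]) := by
  apply traceMk_eq_iff.mpr
  exact ConGen.Rel.of _ _ ⟨a, b, h, rfl, rfl⟩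

lemma traceMk_move {a : V} {t : List V} (h : ∀ x ∈ t, ¬ G.Adj a x) :
    traceMk G (a :: t) = traceMk G (t ++ [a]) := by
  induction t with
  | nil => rfl
  | cons b s ih =>
    have h1 : traceMk G (a :: b :: s) = traceMk G (b :: a :: s) := by
      rw [show (a :: b :: s) = [a, b] ++ s from rfl, show (b :: a :: s) = [b, a] ++ s from rfl,
        traceMk_append, traceMk_append, traceMk_swap (h b (List.mem_cons_self))]
    rw [h1, show (b :: a :: s) = [b] ++ (a :: s) from rfl, traceMk_append,
      ih (fun x hx => h x (List.mem_cons_of_mem _ hx)), ← traceMk_append]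
    simp

lemma IA_out {L : List V} (hL : L.Nodup) {j : V} (hj : j ∈ IAset G (traceMk G L))
    {v : V} (hadj : G.Adj j v) (hvL : v ∈ L) :
    List.idxOf v L < List.idxOf j L := by
  obtain ⟨u, hu⟩ := hj
  obtain ⟨f, rfl⟩ := Con.mk'_surjective u
  have hML : traceMk G L = traceMk G (FreeMonoid.toList f ++ [j]) := by
    rw [traceMk_append, hu]
    rfl
  set M := FreeMonoid.toList f with hM
  have hrel := traceMk_eq_iff.mp hML
  have hperm : L.Perm (M ++ [j]) := by
    have := perm_of_rel hrel
    simpa using this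
  have hnd : (M ++ [j]).Nodup := hperm.nodup hL
  have hjM : j ∉ M := fun hjm =>
    List.disjoint_of_nodup_append hnd hjm (List.mem_singleton_self _)
  have hjL : j ∈ L := hperm.mem_iff.mpr (by simp)
  have hvM : v ∈ M := by
    have : v ∈ M ++ [j] := hperm.mem_iff.mp hvL
    rcases List.mem_append.mp this with h | h
    · exact h
    · exact absurd (List.mem_singleton.mp h) hadj.ne'
  have hMnd : M.Nodup := (List.nodup_append.mp hnd).1
  have hfM : (M ++ [j]).filter (pf v j) = [v, j] := by
    rw [List.filter_append]
    have h1 : M.filter (pf v j) = [v] := by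
      rw [filter_pf_comm]
      exact filter_pf_single hMnd hvM hjM
    have h2 : [j].filter (pf v j) = [j] := by simp [pf]
    rw [h1, h2]
    rfl
  have hfL : L.filter (pf v j) = [v, j] := by
    have h3 := filter_invariant hrel hadj.symm
    simp only [FreeMonoid.toList_ofList] at h3
    rw [h3, hfM]
  exact (filter_pair_iff hL hvL hjL hadj.ne').mp hfL

lemma IA_in {L : List V} (hL : L.Nodup) {v : V} (hvL : v ∈ L)
    (h : ∀ u, G.Adj v u → ¬ (List.idxOf v L < List.idxOf u L)) :
    v ∈ IAset G (traceMk G L) := by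
  obtain ⟨l1, l2, rfl⟩ := List.append_of_mem hvL
  have hnd2 : (v :: l2).Nodup := (List.nodup_append.mp hL).2.1
  have hvl2 : v ∉ l2 := (List.nodup_cons.mp hnd2).1
  have hvl1 : v ∉ l1 := fun hv1 =>
    List.disjoint_of_nodup_append hL hv1 (List.mem_cons_self)
  have hkey : ∀ x ∈ l2, ¬ G.Adj v x := by
    intro x hx hadj
    apply h x hadj
    have hxv : x ≠ v := fun hxv => hvl2 (hxv ▸ hx)
    have hxl1 : x ∉ l1 := fun hx1 =>
      List.disjoint_of_nodup_append hL hx1 (List.mem_cons_of_mem _ hx)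
    have hfilt : (l1 ++ v :: l2).filter (pf v x) = [v, x] := by
      rw [List.filter_append, filter_pf_nil hvl1 hxl1]
      have h5 : (v :: l2).filter (pf v x) = [v, x] := by
        rw [List.filter_cons_of_pos (by simp [pf])]
        congr 1
        exact filter_pf_single (List.nodup_cons.mp hnd2).2 hx hvl2
      rw [h5]
      rfl
    exact (filter_pair_iff hL (by simp) (by simp [hx]) hxv.symm).mp hfilt
  refine ⟨traceMk G (l1 ++ l2), ?_⟩
  have h1 : traceMk G (v :: l2) = traceMk G (l2 ++ [v]) := traceMk_move hkey
  calc traceMk G (l1 ++ v :: l2) = traceMk G l1 * traceMk G (v :: l2) := traceMk_append _ _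
    _ = traceMk G l1 * (traceMk G l2 * traceMk G [v]) := by rw [h1, traceMk_append]
    _ = traceMk G (l1 ++ l2) * traceMk G [v] := by rw [traceMk_append, mul_assoc]

lemma order_transfer {L L' : List V} (hL : L.Nodup) (hL' : L'.Nodup)
    (hrel : traceMk G L = traceMk G L') {u v : V} (hadj : G.Adj u v)
    (huL : u ∈ L) (hvL : v ∈ L) (huL' : u ∈ L') (hvL' : v ∈ L')
    (h : List.idxOf u L < List.idxOf v L) :
    List.idxOf u L' < List.idxOf v L' := by
  have hf := filter_invariant (traceMk_eq_iff.mp hrel) hadj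
  simp only [FreeMonoid.toList_ofList] at hf
  rw [← filter_pair_iff hL' huL' hvL' hadj.ne, ← hf]
  exact (filter_pair_iff hL huL hvL hadj.ne).mpr h

lemma inj_aux : ∀ (L' L : List V), L.Nodup → L'.Nodup → L.Perm L' →
    (∀ u v : V, G.Adj u v →
      (List.idxOf u L < List.idxOf v L ↔ List.idxOf u L' < List.idxOf v L')) →
    traceMk G L = traceMk G L' := by
  intro L'
  induction L' with
  | nil =>
    intro L _ _ hperm _
    rw [hperm.eq_nil]
  | cons a t' ih =>
    intro L hL hL' hperm hord
    have haL : a ∈ L := hperm.mem_iff.mpr (List.mem_cons_self)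
    obtain ⟨l1, l2, rfl⟩ := List.append_of_mem haL
    have hal1 : a ∉ l1 := fun h =>
      List.disjoint_of_nodup_append hL h (List.mem_cons_self)
    have hal2 : a ∉ l2 := (List.nodup_cons.mp (List.nodup_append.mp hL).2.1).1
    have hsub : (l1 ++ l2).Sublist (l1 ++ a :: l2) :=
      List.Sublist.append_left (List.sublist_cons_self _ _) _
    have hnd12 : (l1 ++ l2).Nodup := hL.sublist hsub
    have hndt' : t'.Nodup := (List.nodup_cons.mp hL').2
    have hperm' : (l1 ++ l2).Perm t' := by
      have h1 : (a :: (l1 ++ l2)).Perm (a :: t') := (List.perm_middle.symm).trans hperm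
      exact h1.cons_inv
    have hna : ∀ x ∈ l1, ¬ G.Adj a x := by
      intro x hx hadj
      have hxa : x ≠ a := fun h => hal1 (h ▸ hx)
      have hxl2 : x ∉ l2 := fun h2 =>
        (List.disjoint_of_nodup_append hL hx) (List.mem_cons_of_mem _ h2)
      have hfilt : (l1 ++ a :: l2).filter (pf x a) = [x, a] := by
        rw [List.filter_append]
        have h1 : l1.filter (pf x a) = [x] := by
          rw [filter_pf_comm]
          exact filter_pf_single (List.nodup_append.mp hL).1 hx hal1
        have h2 : (a :: l2).filter (pf x a) = [a] := by
          rw [List.filter_cons_of_pos (by simp [pf])]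
          rw [filter_pf_nil hxl2 hal2]
        rw [h1, h2]
        rfl
      have hlt : List.idxOf x (l1 ++ a :: l2) < List.idxOf a (l1 ++ a :: l2) :=
        (filter_pair_iff hL (by simp [hx]) (by simp) hxa).mp hfilt
      have := (hord x a hadj.symm).mp hlt
      simp at this
    have key : traceMk G (l1 ++ a :: l2) = traceMk G [a] * traceMk G (l1 ++ l2) := by
      calc traceMk G (l1 ++ a :: l2) = traceMk G ((l1 ++ [a]) ++ l2) := by
            congr 1
            simp
        _ = traceMk G (l1 ++ [a]) * traceMk G l2 := traceMk_append _ _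
        _ = traceMk G (a :: l1) * traceMk G l2 := by rw [← traceMk_move hna]
        _ = traceMk G ((a :: l1) ++ l2) := (traceMk_append _ _).symm
        _ = traceMk G ([a] ++ (l1 ++ l2)) := by congr 1
        _ = traceMk G [a] * traceMk G (l1 ++ l2) := traceMk_append _ _
    have hord' : ∀ u v : V, G.Adj u v →
        (List.idxOf u (l1 ++ l2) < List.idxOf v (l1 ++ l2) ↔
          List.idxOf u t' < List.idxOf v t') := by
      intro u v hadj
      by_cases hu12 : u ∈ l1 ++ l2
      · by_cases hv12 : v ∈ l1 ++ l2
        · have hut' : u ∈ t' := hperm'.mem_iff.mp hu12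
          have hvt' : v ∈ t' := hperm'.mem_iff.mp hv12
          have hua : u ≠ a := fun h => by
            subst h
            rcases List.mem_append.mp hu12 with h | h
            · exact hal1 h
            · exact hal2 h
          have hva : v ≠ a := fun h => by
            subst h
            rcases List.mem_append.mp hv12 with h | h
            · exact hal1 h
            · exact hal2 h
          have hpa : pf u v a = false := by
            simp only [pf, Bool.or_eq_false_iff, decide_eq_false_iff_not]
            exact ⟨fun h => hua h.symm, fun h => hva h.symm⟩
          have hfL : (l1 ++ a :: l2).filter (pf u v) = (l1 ++ l2).filter (pf u v) := by
            rw [List.filter_append, List.filter_append,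
              List.filter_cons_of_neg (by simp [hpa])]
          have hfL' : (a :: t').filter (pf u v) = t'.filter (pf u v) :=
            List.filter_cons_of_neg (by simp [hpa])
          have huL : u ∈ l1 ++ a :: l2 := hsub.mem hu12
          have hvL : v ∈ l1 ++ a :: l2 := hsub.mem hv12
          rw [← filter_pair_iff hnd12 hu12 hv12 hadj.ne,
            ← filter_pair_iff hndt' hut' hvt' hadj.ne, ← hfL, ← hfL',
            filter_pair_iff hL huL hvL hadj.ne,
            filter_pair_iff hL' (List.mem_cons_of_mem _ hut') (List.mem_cons_of_mem _ hvt')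
              hadj.ne]
          exact hord u v hadj
        · have hvt' : v ∉ t' := fun h => hv12 (hperm'.mem_iff.mpr h)
          have h1 : List.idxOf v (l1 ++ l2) = (l1 ++ l2).length :=
            List.idxOf_eq_length_iff.mpr hv12
          have h2 : List.idxOf v t' = t'.length := List.idxOf_eq_length_iff.mpr hvt'
          have hut' : u ∈ t' := hperm'.mem_iff.mp hu12
          have h3 : List.idxOf u (l1 ++ l2) < (l1 ++ l2).length :=
            List.idxOf_lt_length_iff.mpr hu12
          have h4 : List.idxOf u t' < t'.length := List.idxOf_lt_length_iff.mpr hut'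
          rw [h1, h2]
          exact ⟨fun _ => h4, fun _ => h3⟩
      · have hut' : u ∉ t' := fun h => hu12 (hperm'.mem_iff.mpr h)
        have h1 : List.idxOf u (l1 ++ l2) = (l1 ++ l2).length :=
          List.idxOf_eq_length_iff.mpr hu12
        have h2 : List.idxOf u t' = t'.length := List.idxOf_eq_length_iff.mpr hut'
        have h3 : List.idxOf v (l1 ++ l2) ≤ (l1 ++ l2).length := List.idxOf_le_length
        have h4 : List.idxOf v t' ≤ t'.length := List.idxOf_le_length
        rw [h1, h2]
        constructor
        · intro h
          omega
        · intro h
          omega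
    rw [key, ih (l1 ++ l2) hnd12 hndt' hperm' hord',
      show (a :: t') = [a] ++ t' from rfl, traceMk_append]

end Stmt10Aux


open Stmt10Aux in
theorem stmt10 {V : Type*} [Fintype V] [DecidableEq V] (G : SimpleGraph V) (i : V) :
    (∀ L L' : List V,
      (L.Nodup ∧ (∀ v, v ∈ L) ∧ IAset G (traceMk G L) = {i}) →
      (L'.Nodup ∧ (∀ v, v ∈ L') ∧ IAset G (traceMk G L') = {i}) →
      traceMk G L = traceMk G L' → wordOrient G L = wordOrient G L') ∧
    (∀ L : List V, (L.Nodup ∧ (∀ v, v ∈ L) ∧ IAset G (traceMk G L) = {i}) →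
      (∀ u v, G.Adj u v → (wordOrient G L u v ↔ ¬ wordOrient G L v u)) ∧
      (∀ x, ¬ Relation.TransGen (wordOrient G L) x x) ∧
      (∀ u, ¬ wordOrient G L i u) ∧
      (∀ v, (∀ u, ¬ wordOrient G L v u) → v = i)) ∧
    (∀ L L' : List V,
      (L.Nodup ∧ (∀ v, v ∈ L) ∧ IAset G (traceMk G L) = {i}) →
      (L'.Nodup ∧ (∀ v, v ∈ L') ∧ IAset G (traceMk G L') = {i}) →
      wordOrient G L = wordOrient G L' → traceMk G L = traceMk G L') := by
  refine ⟨?_, ?_, ?_⟩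
  · rintro L L' ⟨hnd, hall, -⟩ ⟨hnd', hall', -⟩ heq
    funext u v
    apply propext
    constructor
    · rintro ⟨hadj, hlt⟩
      exact ⟨hadj, order_transfer hnd hnd' heq hadj (hall u) (hall v) (hall' u) (hall' v) hlt⟩
    · rintro ⟨hadj, hlt⟩
      exact ⟨hadj, order_transfer hnd' hnd heq.symm hadj (hall' u) (hall' v) (hall u) (hall v) hlt⟩
  · rintro L ⟨hnd, hall, hIA⟩
    refine ⟨?_, ?_, ?_, ?_⟩
    · intro u v hadj
      constructor
      · rintro ⟨-, h1⟩ ⟨-, h2⟩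
        omega
      · intro h
        refine ⟨hadj, ?_⟩
        rcases Nat.lt_trichotomy (List.idxOf u L) (List.idxOf v L) with h' | h' | h'
        · exact h'
        · exact absurd ((List.idxOf_inj (hall u)).mp h') hadj.ne
        · exact absurd ⟨hadj.symm, h'⟩ h
    · intro x hx
      have h1 : Relation.TransGen
          (fun a b : V => List.idxOf a L < List.idxOf b L) x x :=
        Relation.TransGen.mono (fun a b (h : wordOrient G L a b) => h.2) x x hx
      have ht : Transitive (fun a b : V => List.idxOf a L < List.idxOf b L) :=
        fun _ _ _ hab hbc => Nat.lt_trans hab hbc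
      rw [@Relation.transGen_eq_self _ _ ⟨ht⟩] at h1
      omega
    · rintro u ⟨hadj, hlt⟩
      have hiIA : i ∈ IAset G (traceMk G L) := by rw [hIA]; exact rfl
      have := IA_out hnd hiIA hadj (hall u)
      omega
    · intro v hv
      have hvIA : v ∈ IAset G (traceMk G L) :=
        IA_in hnd (hall v) (fun u hadj hlt => hv u ⟨hadj, hlt⟩)
      rw [hIA] at hvIA
      exact hvIA
  · rintro L L' ⟨hnd, hall, -⟩ ⟨hnd', hall', -⟩ heq
    apply inj_aux L' L hnd hnd'
      ((List.perm_ext_iff_of_nodup hnd hnd').mpr (fun a => by simp [hall a, hall' a]))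
    intro u v hadj
    have h1 : wordOrient G L u v = wordOrient G L' u v := congrFun (congrFun heq u) v
    constructor
    · intro h
      have h2 : wordOrient G L u v := ⟨hadj, h⟩
      rw [h1] at h2
      exact h2.2
    · intro h
      have h2 : wordOrient G L' u v := ⟨hadj, h⟩
      rw [← h1] at h2
      exact h2.2
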